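/- Let X ∈ ℝ^{d_in×n} and Y ∈ ℝ^{d_out×n}. Let P_X be the orthogonal projector of ℝ^n onto row(X), applied to each row of a matrix, and set Y_∥ := P_X Y and Y_⊥ := Y − Y_∥. Then for every r ∈ ℕ, E_id(r)² = ‖Y_⊥‖_F² + (s_{>r}(Y_∥))². -/

import Mathlib

open scoped BigOperators

namespace CoLA

noncomputable section

/-- Frobenius norm of a real matrix. -/
def frobNorm {m n : ℕ} (M : Matrix (Fin m) (Fin n) ℝ) : ℝ :=
  Real.sqrt (∑ i, ∑ j, (M i j) ^ 2)

/-- Entrywise application of `σ` to a matrix. -/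
def entrywise (σ : ℝ → ℝ) {m n : ℕ} (M : Matrix (Fin m) (Fin n) ℝ) :
    Matrix (Fin m) (Fin n) ℝ :=
  Matrix.of fun i j => σ (M i j)

/-- `E_σ(r)`. -/
def Esig (σ : ℝ → ℝ) {din dout n : ℕ} (X : Matrix (Fin din) (Fin n) ℝ)
    (Y : Matrix (Fin dout) (Fin n) ℝ) (r : ℕ) : ℝ :=
  ⨅ (A : Matrix (Fin r) (Fin din) ℝ), ⨅ (B : Matrix (Fin dout) (Fin r) ℝ),
    frobNorm (Y - B * entrywise σ (A * X))

/-- `E_id(r)`. -/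
def Eid {din dout n : ℕ} (X : Matrix (Fin din) (Fin n) ℝ)
    (Y : Matrix (Fin dout) (Fin n) ℝ) (r : ℕ) : ℝ :=
  ⨅ (A : Matrix (Fin r) (Fin din) ℝ), ⨅ (B : Matrix (Fin dout) (Fin r) ℝ),
    frobNorm (Y - B * A * X)

/-- The (unsorted) singular values of `M`: square roots of eigenvalues of `Mᴴ * M`. -/
def svAux {m n : ℕ} (M : Matrix (Fin m) (Fin n) ℝ) : Fin n → ℝ :=
  fun i => Real.sqrt ((show (M.transpose * M).IsHermitian by
    simpa using Matrix.isHermitian_conjTranspose_mul_self M).eigenvalues i)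

/-- Singular values of `M` sorted in non-increasing order (0-indexed). -/
def sv {m n : ℕ} (M : Matrix (Fin m) (Fin n) ℝ) : Fin n → ℝ :=
  fun i => svAux M (Tuple.sort (fun j => -(svAux M j)) i)

/-- `k`-th largest singular value (1-indexed, `0` for `k > n`). -/
def sVal {m n : ℕ} (M : Matrix (Fin m) (Fin n) ℝ) (k : ℕ) : ℝ :=
  if h : k - 1 < n then sv M ⟨k - 1, h⟩ else 0

/-- `s_{>k}(M) = √(∑_{j>k} s_j(M)²)` (with `j` 1-indexed). -/
def sGt {m n : ℕ} (M : Matrix (Fin m) (Fin n) ℝ) (k : ℕ) : ℝ :=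
  Real.sqrt (∑ j : Fin n, if k ≤ (j : ℕ) then (sv M j) ^ 2 else 0)

/-- Spectral (ℓ²-operator) norm of a real matrix. -/
def specNorm {m n : ℕ} (M : Matrix (Fin m) (Fin n) ℝ) : ℝ :=
  ‖LinearMap.toContinuousLinearMap (Matrix.toEuclideanLin M)‖

/-- Effective rank `r_α(M)`: the least `k` with `∑_{i≤k} s_i² ≥ α ∑_i s_i²`. -/
def effRank {m n : ℕ} (M : Matrix (Fin m) (Fin n) ℝ) (α : ℝ) : ℕ :=
  sInf {k : ℕ |
    α * ∑ i : Fin n, (sv M i) ^ 2 ≤ ∑ i : Fin n, if (i : ℕ) < k then (sv M i) ^ 2 else 0}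

/-- Row space of `X` inside `Fin n → ℝ`. -/
def rowSpace {d n : ℕ} (X : Matrix (Fin d) (Fin n) ℝ) : Submodule ℝ (Fin n → ℝ) :=
  Submodule.span ℝ (Set.range X)

/-- Row space of `X` as a submodule of Euclidean space. -/
def rowSpaceE {d n : ℕ} (X : Matrix (Fin d) (Fin n) ℝ) :
    Submodule ℝ (EuclideanSpace ℝ (Fin n)) :=
  Submodule.span ℝ (Set.range fun i => (WithLp.equiv 2 (Fin n → ℝ)).symm (X i))

/-- Row-wise orthogonal projection of the rows of `Y` onto the subspace `S`. -/
def projRows {dout n : ℕ} (S : Submodule ℝ (EuclideanSpace ℝ (Fin n)))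
    (Y : Matrix (Fin dout) (Fin n) ℝ) : Matrix (Fin dout) (Fin n) ℝ :=
  Matrix.of fun i => WithLp.equiv 2 (Fin n → ℝ)
    ((S.orthogonalProjectionOnto ((WithLp.equiv 2 (Fin n → ℝ)).symm (Y i)) :
      EuclideanSpace ℝ (Fin n)))

/-- Row-wise orthogonal projection onto the orthogonal complement of `span{v}`. -/
def projVperp {dout n : ℕ} (v : Fin n → ℝ) (Y : Matrix (Fin dout) (Fin n) ℝ) :
    Matrix (Fin dout) (Fin n) ℝ :=
  projRows (Submodule.span ℝ {(WithLp.equiv 2 (Fin n → ℝ)).symm v})ᗮ Y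


open scoped RealInnerProductSpace Matrix
open Matrix

section Helpers
variable {dout n : ℕ}

lemma inner_eq_dot (x y : EuclideanSpace ℝ (Fin n)) : ⟪x, y⟫ = ∑ i, x i * y i := by
  simp [PiLp.inner_apply, RCLike.inner_apply, mul_comm]

lemma dot_mulVec_mulVec (Z : Matrix (Fin dout) (Fin n) ℝ) (v w : Fin n → ℝ) :
    (Z *ᵥ v) ⬝ᵥ (Z *ᵥ w) = v ⬝ᵥ ((Zᴴ * Z) *ᵥ w) := by
  rw [← Matrix.mulVec_mulVec]
  conv_rhs => rw [Matrix.dotProduct_mulVec, Matrix.vecMul_conjTranspose]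
  simp

lemma dotProduct_eq_sum (v w : Fin n → ℝ) : v ⬝ᵥ w = ∑ i, v i * w i := rfl

lemma mulVec_apply' (Z : Matrix (Fin dout) (Fin n) ℝ) (v : Fin n → ℝ) (i : Fin dout) :
    (Z *ᵥ v) i = ∑ j, Z i j * v j := rfl

lemma normE_sq (x : EuclideanSpace ℝ (Fin n)) : ‖x‖ ^ 2 = ∑ i, x i ^ 2 := by
  rw [EuclideanSpace.norm_eq, Real.sq_sqrt (by positivity)]
  simp [Real.norm_eq_abs, sq_abs]

lemma sumE {ι : Type*} (s : Finset ι) (f : ι → EuclideanSpace ℝ (Fin n)) :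
    ((∑ j ∈ s, f j : EuclideanSpace ℝ (Fin n)) : Fin n → ℝ) = ∑ j ∈ s, (f j : Fin n → ℝ) :=
  map_sum (WithLp.linearEquiv 2 ℝ (Fin n → ℝ)) f s

lemma bessel (x : EuclideanSpace ℝ (Fin n)) {ι : Type*} [Fintype ι]
    {f : ι → EuclideanSpace ℝ (Fin n)} (hf : Orthonormal ℝ f) :
    ∑ k, ⟪f k, x⟫ ^ 2 ≤ ∑ i, x i ^ 2 := by
  have h := hf.sum_inner_products_le (s := Finset.univ) x
  simp only [Real.norm_eq_abs, sq_abs] at h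
  rwa [normE_sq] at h

variable (Z : Matrix (Fin dout) (Fin n) ℝ)

abbrev hGram : ((Zᴴ * Z)).IsHermitian := Matrix.isHermitian_conjTranspose_mul_self Z
abbrev lam : Fin n → ℝ := (hGram Z).eigenvalues
abbrev evec (j : Fin n) : EuclideanSpace ℝ (Fin n) := (hGram Z).eigenvectorBasis j

lemma eig_mulVec (j : Fin n) : (Zᴴ * Z) *ᵥ (evec Z j) = lam Z j • (evec Z j) :=
  (hGram Z).mulVec_eigenvectorBasis j

lemma evec_dot_self (j : Fin n) : (evec Z j : Fin n → ℝ) ⬝ᵥ (evec Z j) = 1 := by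
  have h := (hGram Z).eigenvectorBasis.orthonormal.1 j
  rw [@norm_eq_sqrt_real_inner] at h
  have h2 : ⟪evec Z j, evec Z j⟫ = 1 := by
    nlinarith [Real.sq_sqrt (real_inner_self_nonneg (x := evec Z j)),
      real_inner_self_nonneg (x := evec Z j)]
  rw [inner_eq_dot] at h2
  exact h2

lemma lam_eq (j : Fin n) : (Z *ᵥ (evec Z j)) ⬝ᵥ (Z *ᵥ (evec Z j)) = lam Z j := by
  rw [dot_mulVec_mulVec, eig_mulVec, dotProduct_smul]
  simp [evec_dot_self]

lemma lam_nonneg (j : Fin n) : 0 ≤ lam Z j := by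
  rw [← lam_eq, dotProduct_eq_sum]
  simp_rw [← sq]
  positivity

lemma parseval (x : EuclideanSpace ℝ (Fin n)) :
    ∑ j, ⟪evec Z j, x⟫ ^ 2 = ∑ i, x i ^ 2 := by
  have h := (hGram Z).eigenvectorBasis.sum_inner_mul_inner x x
  calc ∑ j, ⟪evec Z j, x⟫ ^ 2
      = ∑ j, ⟪x, evec Z j⟫ * ⟪evec Z j, x⟫ := by
        refine Finset.sum_congr rfl fun j _ => ?_
        rw [sq, real_inner_comm (evec Z j) x]
    _ = ⟪x, x⟫ := h
    _ = ∑ i, x i ^ 2 := by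
        rw [inner_eq_dot]; exact Finset.sum_congr rfl fun i _ => (sq (x i)).symm

lemma toEuclideanLin_evec (j : Fin n) :
    Matrix.toEuclideanLin (Zᴴ * Z) (evec Z j) = lam Z j • evec Z j := by
  exact_mod_cast congrArg (WithLp.equiv 2 (Fin n → ℝ)).symm (eig_mulVec Z j)

lemma quad_form (v : EuclideanSpace ℝ (Fin n)) :
    ∑ i, ((Z *ᵥ (v : Fin n → ℝ)) i) ^ 2 = ∑ j, lam Z j * ⟪evec Z j, v⟫ ^ 2 := by
  have h1 : ∑ i, ((Z *ᵥ (v : Fin n → ℝ)) i) ^ 2 = ⟪v, Matrix.toEuclideanLin (Zᴴ * Z) v⟫ := by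
    rw [inner_eq_dot]
    have h2 : (Z *ᵥ (v : Fin n → ℝ)) ⬝ᵥ (Z *ᵥ (v : Fin n → ℝ))
        = v ⬝ᵥ ((Zᴴ * Z) *ᵥ (v : Fin n → ℝ)) := dot_mulVec_mulVec Z v v
    rw [dotProduct_eq_sum] at h2
    simp_rw [← sq] at h2
    rw [h2]
    rfl
  rw [h1, ← (hGram Z).eigenvectorBasis.sum_inner_mul_inner v (Matrix.toEuclideanLin (Zᴴ * Z) v)]
  apply Finset.sum_congr rfl
  intro j _
  have hsym := (Matrix.isHermitian_iff_isSymmetric.mp (hGram Z)) (evec Z j) v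
  rw [← hsym, toEuclideanLin_evec, inner_smul_left]
  simp only [RCLike.star_def, starRingEnd_apply, star_trivial]
  rw [real_inner_comm v (evec Z j)]
  ring

lemma svAux_sq (j : Fin n) : svAux Z j ^ 2 = lam Z j :=
  Real.sq_sqrt (lam_nonneg Z j)

lemma lam_sorted : Antitone (fun k => lam Z (Tuple.sort (fun j => -(svAux Z j)) k)) := by
  intro a b hab
  have h := Tuple.monotone_sort (fun j => -(svAux Z j)) hab
  simp only [Function.comp_apply, neg_le_neg_iff] at h
  have hb : 0 ≤ svAux Z (Tuple.sort (fun j => -(svAux Z j)) b) := Real.sqrt_nonneg _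
  calc lam Z (Tuple.sort (fun j => -(svAux Z j)) b)
      = svAux Z (Tuple.sort (fun j => -(svAux Z j)) b) ^ 2 := (svAux_sq Z _).symm
    _ ≤ svAux Z (Tuple.sort (fun j => -(svAux Z j)) a) ^ 2 := by
        apply pow_le_pow_left₀ hb h
    _ = _ := svAux_sq Z _

lemma sv_sq (j : Fin n) : sv Z j ^ 2 = lam Z (Tuple.sort (fun j => -(svAux Z j)) j) :=
  svAux_sq Z _

lemma frob_rows (W : Matrix (Fin dout) (Fin n) ℝ) :
    ∑ i, ∑ jc, (W i jc) ^ 2 = ∑ i, ‖((WithLp.equiv 2 (Fin n → ℝ)).symm (W i))‖ ^ 2 := by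
  refine Finset.sum_congr rfl fun i _ => ?_
  rw [normE_sq]
  exact Finset.sum_congr rfl fun jc _ => by rw [WithLp.equiv_symm_apply, PiLp.toLp_apply]

end Helpers

section Tail

lemma sum_indicator_one {n r : ℕ} (hr : r ≤ n) :
    ∑ j : Fin n, (if r ≤ (j : ℕ) then (1 : ℝ) else 0) = (n : ℝ) - r := by
  rw [Fin.sum_univ_eq_sum_range (fun j => if r ≤ j then (1:ℝ) else 0) n]
  rw [← Finset.sum_filter]
  have hfil : (Finset.range n).filter (fun j => r ≤ j) = Finset.Ico r n := by
    ext j; simp [Finset.mem_Ico]; omega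
  rw [hfil]
  simp [Nat.cast_sub hr]

lemma tail_le {n r : ℕ} (μ : Fin n → ℝ) (hmono : Antitone μ) (hnn : ∀ j, 0 ≤ μ j)
    (c : Fin n → ℝ) (h0 : ∀ j, 0 ≤ c j) (h1 : ∀ j, c j ≤ 1)
    (hsum : (n : ℝ) - r ≤ ∑ j, c j) :
    (∑ j : Fin n, if r ≤ (j : ℕ) then μ j else 0) ≤ ∑ j, μ j * c j := by
  rcases lt_or_ge r n with hr | hr
  · set t := μ ⟨r, hr⟩ with ht_def
    have ht : 0 ≤ t := hnn _
    have key : ∀ j : Fin n,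
        t * (c j - if r ≤ (j:ℕ) then 1 else 0) ≤ μ j * c j - (if r ≤ (j:ℕ) then μ j else 0) := by
      intro j
      by_cases h : r ≤ (j : ℕ)
      · simp only [h, if_true]
        have hμ : μ j ≤ t := hmono (show (⟨r,hr⟩ : Fin n) ≤ j from h)
        nlinarith [h1 j]
      · simp only [h, if_false]
        have hμ : t ≤ μ j :=
          hmono (le_of_lt (show j < ⟨r,hr⟩ from Fin.lt_def.mpr (show (j:ℕ) < r by omega)))
        nlinarith [h0 j]
    have hkey := Finset.sum_le_sum (fun j (_ : j ∈ Finset.univ) => key j)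
    have e1 : ∑ j : Fin n, t * (c j - if r ≤ (j:ℕ) then 1 else 0)
        = t * ((∑ j, c j) - ((n:ℝ) - r)) := by
      rw [← Finset.mul_sum, Finset.sum_sub_distrib, sum_indicator_one (le_of_lt hr)]
    have e2 : ∑ j : Fin n, (μ j * c j - if r ≤ (j:ℕ) then μ j else 0)
        = (∑ j, μ j * c j) - ∑ j : Fin n, (if r ≤ (j:ℕ) then μ j else 0) :=
      Finset.sum_sub_distrib _ _
    rw [e1, e2] at hkey
    nlinarith
  · have hz : ∀ j : Fin n, ¬ (r ≤ (j:ℕ)) := fun j => by have := j.isLt; omega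
    simp only [hz, if_false, Finset.sum_const_zero]
    exact Finset.sum_nonneg fun j _ => mul_nonneg (hnn j) (h0 j)

end Tail

section Core
variable {dout n : ℕ} (Z : Matrix (Fin dout) (Fin n) ℝ)

lemma core_lower {r : ℕ} (B : Matrix (Fin dout) (Fin r) ℝ) (C : Matrix (Fin r) (Fin n) ℝ) :
    (∑ j : Fin n, if r ≤ (j:ℕ) then lam Z (Tuple.sort (fun j => -(svAux Z j)) j) else 0)
      ≤ ∑ i, ∑ jc, ((Z - B * C) i jc) ^ 2 := by
  classical
  set σ := Tuple.sort (fun j => -(svAux Z j)) with hσ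
  set K : Submodule ℝ (EuclideanSpace ℝ (Fin n)) :=
    LinearMap.ker (C.mulVecLin ∘ₗ (WithLp.linearEquiv 2 ℝ (Fin n → ℝ)).toLinearMap) with hK
  set m := Module.finrank ℝ K with hm
  have hdim : (n : ℝ) - r ≤ (m : ℝ) := by
    have h1 := LinearMap.finrank_range_add_finrank_ker
      (C.mulVecLin ∘ₗ (WithLp.linearEquiv 2 ℝ (Fin n → ℝ)).toLinearMap)
    have h2 : Module.finrank ℝ (EuclideanSpace ℝ (Fin n)) = n := finrank_euclideanSpace_fin
    have h3 : Module.finrank ℝ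
        (LinearMap.range (C.mulVecLin ∘ₗ (WithLp.linearEquiv 2 ℝ (Fin n → ℝ)).toLinearMap)) ≤ r := by
      have := Submodule.finrank_le
        (LinearMap.range (C.mulVecLin ∘ₗ (WithLp.linearEquiv 2 ℝ (Fin n → ℝ)).toLinearMap))
      simpa using this
    rw [h2, ← hK] at h1
    rw [← hm] at h1
    have h4 : (n : ℕ) ≤ r + m := by omega
    have h5 := (Nat.cast_le (α := ℝ)).mpr h4
    push_cast at h5
    linarith
  set e := stdOrthonormalBasis ℝ K with he
  set f : Fin m → EuclideanSpace ℝ (Fin n) := fun k => (e k : EuclideanSpace ℝ (Fin n)) with hf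
  have horth : Orthonormal ℝ f := e.orthonormal.comp_linearIsometry K.subtypeₗᵢ
  have hCf : ∀ k, C *ᵥ (f k : Fin n → ℝ) = 0 := by
    intro k
    have h2 : (C.mulVecLin ∘ₗ (WithLp.linearEquiv 2 ℝ (Fin n → ℝ)).toLinearMap) (e k : EuclideanSpace ℝ (Fin n)) = 0 :=
      (e k).2
    exact h2
  have hBCf : ∀ k, (B * C) *ᵥ (f k : Fin n → ℝ) = 0 := by
    intro k
    rw [← Matrix.mulVec_mulVec, hCf, Matrix.mulVec_zero]
  set c : Fin n → ℝ := fun j => ∑ k, ⟪evec Z j, f k⟫ ^ 2 with hc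
  have hc0 : ∀ j, 0 ≤ c j := fun j => Finset.sum_nonneg fun k _ => sq_nonneg _
  have hc1 : ∀ j, c j ≤ 1 := by
    intro j
    have hb := bessel (evec Z j) horth
    have h1 : ∑ i, (evec Z j) i ^ 2 = 1 := by
      have h2 := evec_dot_self Z j
      rw [dotProduct_eq_sum] at h2
      simpa [sq] using h2
    rw [h1] at hb
    calc c j = ∑ k, ⟪f k, evec Z j⟫ ^ 2 :=
          Finset.sum_congr rfl fun k _ => by rw [real_inner_comm]
      _ ≤ 1 := hb
  have hpars : ∀ k, ∑ j, ⟪evec Z j, f k⟫ ^ 2 = 1 := by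
    intro k
    rw [parseval Z (f k)]
    have hnrm := horth.1 k
    have h2 := normE_sq (f k)
    rw [hnrm] at h2
    simpa using h2.symm
  have hcsum : (n : ℝ) - r ≤ ∑ j, c j := by
    have hcm : ∑ j, c j = (m : ℝ) := by
      calc ∑ j, c j = ∑ k, ∑ j, ⟪evec Z j, f k⟫ ^ 2 := Finset.sum_comm
        _ = ∑ _k : Fin m, (1:ℝ) := Finset.sum_congr rfl fun k _ => hpars k
        _ = (m : ℝ) := by simp
    rw [hcm]; exact hdim
  have step1 : ∑ k, ∑ i, ((Z *ᵥ (f k : Fin n → ℝ)) i) ^ 2 ≤ ∑ i, ∑ jc, ((Z - B * C) i jc) ^ 2 := by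
    conv_rhs => rw [frob_rows]
    have hZf : ∀ k, (Z - B * C) *ᵥ (f k : Fin n → ℝ) = Z *ᵥ (f k : Fin n → ℝ) := by
      intro k
      rw [Matrix.sub_mulVec, hBCf, sub_zero]
    calc ∑ k, ∑ i, ((Z *ᵥ (f k : Fin n → ℝ)) i) ^ 2
        = ∑ i, ∑ k, ⟪f k, (WithLp.equiv 2 (Fin n → ℝ)).symm ((Z - B * C) i)⟫ ^ 2 := by
          rw [Finset.sum_comm]
          refine Finset.sum_congr rfl fun i _ => Finset.sum_congr rfl fun k _ => ?_
          rw [inner_eq_dot]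
          have h3 : ((Z - B*C) *ᵥ (f k : Fin n → ℝ)) i = (Z *ᵥ (f k : Fin n → ℝ)) i := by
            rw [hZf]
          rw [← h3, mulVec_apply']
          congr 1
          exact Finset.sum_congr rfl fun l _ => by rw [WithLp.equiv_symm_apply, PiLp.toLp_apply]; ring
      _ ≤ ∑ i, ‖(WithLp.equiv 2 (Fin n → ℝ)).symm ((Z - B * C) i)‖ ^ 2 := by
          refine Finset.sum_le_sum fun i _ => ?_
          rw [normE_sq]
          exact bessel _ horth
  have step2 : ∑ k, ∑ i, ((Z *ᵥ (f k : Fin n → ℝ)) i) ^ 2 = ∑ j, lam Z j * c j := by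
    calc ∑ k, ∑ i, ((Z *ᵥ (f k : Fin n → ℝ)) i) ^ 2
        = ∑ k, ∑ j, lam Z j * ⟪evec Z j, f k⟫ ^ 2 :=
          Finset.sum_congr rfl fun k _ => quad_form Z (f k)
      _ = ∑ j, lam Z j * c j := by
          rw [Finset.sum_comm]
          exact Finset.sum_congr rfl fun j _ => by rw [hc, Finset.mul_sum]
  have step3 : (∑ j : Fin n, if r ≤ (j:ℕ) then lam Z (σ j) else 0) ≤ ∑ j, lam Z j * c j := by
    have ht := tail_le (fun k => lam Z (σ k)) (lam_sorted Z) (fun k => lam_nonneg Z _)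
      (fun k => c (σ k)) (fun k => hc0 _) (fun k => hc1 _)
      (by rw [Equiv.sum_comp σ c]; exact hcsum)
    calc (∑ j : Fin n, if r ≤ (j:ℕ) then lam Z (σ j) else 0)
        ≤ ∑ k, lam Z (σ k) * c (σ k) := ht
      _ = ∑ j, lam Z j * c j := Equiv.sum_comp σ (fun j => lam Z j * c j)
  linarith

end Core


section Pyth
variable {din dout n : ℕ}

lemma symm_eq_linearEquiv_symm (x : Fin n → ℝ) :
    (WithLp.equiv 2 (Fin n → ℝ)).symm x = (WithLp.linearEquiv 2 ℝ (Fin n → ℝ)).symm x := rfl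

lemma symm_sub (x y : Fin n → ℝ) :
    (WithLp.equiv 2 (Fin n → ℝ)).symm (x - y)
      = (WithLp.equiv 2 (Fin n → ℝ)).symm x - (WithLp.equiv 2 (Fin n → ℝ)).symm y := by
  simp only [symm_eq_linearEquiv_symm]
  exact map_sub _ x y

lemma symm_sum_smul {ι : Type*} (s : Finset ι) (c : ι → ℝ) (v : ι → (Fin n → ℝ)) :
    (WithLp.equiv 2 (Fin n → ℝ)).symm (∑ l ∈ s, c l • v l)
      = ∑ l ∈ s, c l • (WithLp.equiv 2 (Fin n → ℝ)).symm (v l) := by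
  simp only [symm_eq_linearEquiv_symm]
  rw [map_sum]
  exact Finset.sum_congr rfl fun l _ => map_smul _ _ _

lemma row_mul_eq (C : Matrix (Fin dout) (Fin din) ℝ) (X : Matrix (Fin din) (Fin n) ℝ)
    (i : Fin dout) : (C * X) i = ∑ l, C i l • X l := by
  funext j
  simp [Matrix.mul_apply, Finset.sum_apply]

lemma rows_mul_mem (C : Matrix (Fin dout) (Fin din) ℝ) (X : Matrix (Fin din) (Fin n) ℝ)
    (i : Fin dout) : (WithLp.equiv 2 (Fin n → ℝ)).symm ((C * X) i) ∈ rowSpaceE X := by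
  rw [row_mul_eq, show (WithLp.equiv 2 (Fin n → ℝ)).symm (∑ l, C i l • X l)
    = ∑ l, C i l • (WithLp.equiv 2 (Fin n → ℝ)).symm (X l) from symm_sum_smul _ _ _]
  exact Submodule.sum_mem _ fun l _ =>
    Submodule.smul_mem _ _ (Submodule.subset_span ⟨l, rfl⟩)

lemma projRows_row (S : Submodule ℝ (EuclideanSpace ℝ (Fin n))) (Y : Matrix (Fin dout) (Fin n) ℝ)
    (i : Fin dout) :
    (WithLp.equiv 2 (Fin n → ℝ)).symm ((projRows S Y) i)
      = (S.orthogonalProjectionOnto ((WithLp.equiv 2 (Fin n → ℝ)).symm (Y i)) :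
          EuclideanSpace ℝ (Fin n)) :=
  Equiv.symm_apply_apply _ _

lemma pythagoras (X : Matrix (Fin din) (Fin n) ℝ) (Y M : Matrix (Fin dout) (Fin n) ℝ)
    (hM : ∀ i, (WithLp.equiv 2 (Fin n → ℝ)).symm (M i) ∈ rowSpaceE X) :
    ∑ i, ∑ j, ((Y - M) i j) ^ 2
      = (∑ i, ∑ j, ((Y - projRows (rowSpaceE X) Y) i j) ^ 2)
        + ∑ i, ∑ j, ((projRows (rowSpaceE X) Y - M) i j) ^ 2 := by
  rw [frob_rows, frob_rows, frob_rows, ← Finset.sum_add_distrib]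
  refine Finset.sum_congr rfl fun i _ => ?_
  set S := rowSpaceE X
  set y := (WithLp.equiv 2 (Fin n → ℝ)).symm (Y i) with hy
  set me := (WithLp.equiv 2 (Fin n → ℝ)).symm (M i) with hme
  set pe := (S.orthogonalProjectionOnto y : EuclideanSpace ℝ (Fin n)) with hpe
  have h1 : (WithLp.equiv 2 (Fin n → ℝ)).symm ((Y - M) i) = y - me := by
    have : (Y - M) i = Y i - M i := rfl
    rw [this, symm_sub]
  have h2 : (WithLp.equiv 2 (Fin n → ℝ)).symm ((Y - projRows S Y) i) = y - pe := by
    have : (Y - projRows S Y) i = Y i - (projRows S Y) i := rfl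
    rw [this, symm_sub, projRows_row]
  have h3 : (WithLp.equiv 2 (Fin n → ℝ)).symm ((projRows S Y - M) i) = pe - me := by
    have : (projRows S Y - M) i = (projRows S Y) i - M i := rfl
    rw [this, symm_sub, projRows_row]
  rw [h1, h2, h3]
  have hdecomp : y - me = (y - pe) + (pe - me) := by abel
  rw [hdecomp, norm_add_sq_real]
  have horthog : ⟪y - pe, pe - me⟫ = 0 := by
    apply Submodule.inner_left_of_mem_orthogonal (K := S)
    · exact Submodule.sub_mem S (S.orthogonalProjectionOnto y).2 (hM i)
    · exact Submodule.sub_starProjection_mem_orthogonal (K := S) y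
  rw [horthog]
  ring

end Pyth


section Upper
variable {din dout n : ℕ} (Z : Matrix (Fin dout) (Fin n) ℝ)

lemma evec_dot (j j' : Fin n) :
    (evec Z j : Fin n → ℝ) ⬝ᵥ (evec Z j') = if j = j' then 1 else 0 := by
  have h := orthonormal_iff_ite.mp (hGram Z).eigenvectorBasis.orthonormal j j'
  rw [inner_eq_dot] at h
  exact h

lemma Zmul_evec_zero (j : Fin n) (h : lam Z j = 0) : Z *ᵥ (evec Z j : Fin n → ℝ) = 0 := by
  have h1 := lam_eq Z j
  rw [h, dotProduct_eq_sum] at h1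
  simp_rw [← sq] at h1
  funext i
  have h2 := (Finset.sum_eq_zero_iff_of_nonneg (fun i _ => sq_nonneg _)).mp h1 i (Finset.mem_univ i)
  have := sq_eq_zero_iff.mp h2
  simpa using this

lemma conjT_mulVec (w : Fin dout → ℝ) : Zᴴ *ᵥ w = ∑ i, w i • Z i := by
  funext jc
  simp [Matrix.mulVec, dotProduct, Matrix.conjTranspose_apply, Finset.sum_apply, mul_comm]

lemma sum_sq_orthfam {ι : Type*} [Fintype ι] [DecidableEq ι] (a : ι → ℝ) (w : ι → Fin n → ℝ)
    (hw : ∀ t s, w t ⬝ᵥ w s = if t = s then 1 else 0) :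
    ∑ jc, (∑ t, a t * w t jc) ^ 2 = ∑ t, a t ^ 2 := by
  have expand : ∀ jc : Fin n, (∑ t, a t * w t jc) ^ 2
      = ∑ t, ∑ s, (a t * w t jc) * (a s * w s jc) := by
    intro jc; rw [sq, Finset.sum_mul_sum]
  simp_rw [expand]
  rw [Finset.sum_comm]
  refine Finset.sum_congr rfl fun t _ => ?_
  rw [Finset.sum_comm]
  have hterm : ∀ s, ∑ jc, (a t * w t jc) * (a s * w s jc)
      = a t * a s * (if t = s then 1 else 0) := by
    intro s
    rw [← hw t s, dotProduct_eq_sum, Finset.mul_sum]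
    exact Finset.sum_congr rfl fun jc _ => by ring
  simp_rw [hterm]
  simp [Finset.sum_ite_eq, sq]

lemma E_sum_smul_coord {ι : Type*} [Fintype ι] (c : ι → ℝ) (v : ι → EuclideanSpace ℝ (Fin n))
    (jc : Fin n) :
    (∑ l, c l • v l : EuclideanSpace ℝ (Fin n)) jc = ∑ l, c l * (v l) jc := by
  have h := map_sum (WithLp.linearEquiv 2 ℝ (Fin n → ℝ)) (fun l => c l • v l) Finset.univ
  calc (∑ l, c l • v l : EuclideanSpace ℝ (Fin n)) jc
      = (WithLp.linearEquiv 2 ℝ (Fin n → ℝ)) (∑ l, c l • v l) jc := rfl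
    _ = (∑ l, (WithLp.linearEquiv 2 ℝ (Fin n → ℝ)) (c l • v l)) jc := by rw [h]
    _ = ∑ l, c l * (v l) jc := by
        rw [Finset.sum_apply]
        refine Finset.sum_congr rfl fun l _ => ?_
        rw [_root_.map_smul]
        rfl

lemma equiv_sum_smul_symm {ι : Type*} [Fintype ι] (c : ι → ℝ) (v : ι → (Fin n → ℝ)) :
    WithLp.equiv 2 (Fin n → ℝ) (∑ l, c l • (WithLp.equiv 2 (Fin n → ℝ)).symm (v l))
      = ∑ l, c l • v l := by
  rw [← symm_sum_smul]
  exact Equiv.apply_symm_apply _ _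

lemma inner_evec_row (j : Fin n) (i : Fin dout) :
    ⟪evec Z j, (WithLp.equiv 2 (Fin n → ℝ)).symm (Z i)⟫ = (Z *ᵥ (evec Z j : Fin n → ℝ)) i := by
  rw [inner_eq_dot, mulVec_apply']
  exact Finset.sum_congr rfl fun jc _ => by rw [WithLp.equiv_symm_apply, PiLp.toLp_apply]; ring

lemma exists_factor {r : ℕ} (X : Matrix (Fin din) (Fin n) ℝ)
    (hrows : ∀ i, (WithLp.equiv 2 (Fin n → ℝ)).symm (Z i) ∈ rowSpaceE X) :
    ∃ (A : Matrix (Fin r) (Fin din) ℝ) (B : Matrix (Fin dout) (Fin r) ℝ),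
      ∑ i, ∑ jc, ((Z - B * (A * X)) i jc) ^ 2
        = ∑ t : Fin n, if r ≤ (t:ℕ) then lam Z (Tuple.sort (fun j => -(svAux Z j)) t) else 0 := by
  classical
  set σ := Tuple.sort (fun j => -(svAux Z j)) with hσ
  set u : Fin n → (Fin n → ℝ) := fun j => (evec Z j : Fin n → ℝ) with hu
  set uvec : ℕ → (Fin n → ℝ) := fun k =>
    if h : k < n then (if lam Z (σ ⟨k, h⟩) = 0 then 0 else u (σ ⟨k, h⟩)) else 0 with huvec
  have huvec_mem : ∀ k : ℕ, (WithLp.equiv 2 (Fin n → ℝ)).symm (uvec k) ∈ rowSpaceE X := by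
    intro k
    simp only [huvec]
    by_cases h : k < n
    · rw [dif_pos h]
      by_cases h0 : lam Z (σ ⟨k, h⟩) = 0
      · rw [if_pos h0]
        simp only [symm_eq_linearEquiv_symm, map_zero]
        exact Submodule.zero_mem _
      · rw [if_neg h0]
        set j := σ ⟨k, h⟩
        have key : u j = (lam Z j)⁻¹ • ((Zᴴ * Z) *ᵥ u j) := by
          rw [eig_mulVec]
          rw [smul_smul, inv_mul_cancel₀ h0, one_smul]
        rw [key, ← Matrix.mulVec_mulVec, conjT_mulVec]
        simp only [symm_eq_linearEquiv_symm, _root_.map_smul]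
        rw [← symm_eq_linearEquiv_symm, show (WithLp.equiv 2 (Fin n → ℝ)).symm
          (∑ i, (Z *ᵥ u j) i • Z i) = ∑ i, (Z *ᵥ u j) i • (WithLp.equiv 2 (Fin n → ℝ)).symm (Z i)
          from symm_sum_smul _ _ _]
        exact Submodule.smul_mem _ _ (Submodule.sum_mem _ fun i _ =>
          Submodule.smul_mem _ _ (hrows i))
    · rw [dif_neg h]
      simp only [symm_eq_linearEquiv_symm, map_zero]
      exact Submodule.zero_mem _
  have hex : ∀ k : Fin r, ∃ c : Fin din → ℝ,
      ∑ l, c l • (WithLp.equiv 2 (Fin n → ℝ)).symm (X l)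
        = (WithLp.equiv 2 (Fin n → ℝ)).symm (uvec (k : ℕ)) := by
    intro k
    exact (Submodule.mem_span_range_iff_exists_fun ℝ).mp (huvec_mem (k : ℕ))
  choose a ha using hex
  refine ⟨Matrix.of fun k l => a k l, Matrix.of fun i k => (Z *ᵥ uvec (k : ℕ)) i, ?_⟩
  set A : Matrix (Fin r) (Fin din) ℝ := Matrix.of fun k l => a k l with hA
  set B : Matrix (Fin dout) (Fin r) ℝ := Matrix.of fun i k => (Z *ᵥ uvec (k : ℕ)) i with hB
  have hAX : ∀ k : Fin r, (A * X) k = uvec (k : ℕ) := by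
    intro k
    rw [row_mul_eq]
    have h1 : ∀ l, A k l = a k l := fun l => rfl
    calc ∑ l, A k l • X l = ∑ l, a k l • X l := by
          exact Finset.sum_congr rfl fun l _ => by rw [h1]
      _ = WithLp.equiv 2 (Fin n → ℝ)
            (∑ l, a k l • (WithLp.equiv 2 (Fin n → ℝ)).symm (X l)) := by
          exact (equiv_sum_smul_symm _ _).symm
      _ = uvec (k : ℕ) := by rw [ha k]; exact Equiv.apply_symm_apply _ _
  -- the G function
  have hG : ∀ i jc, (B * (A * X)) i jc
      = ∑ k : Fin r, (Z *ᵥ uvec (k : ℕ)) i * uvec (k : ℕ) jc := by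
    intro i jc
    rw [Matrix.mul_apply]
    refine Finset.sum_congr rfl fun k _ => ?_
    have h2 : (A * X) k jc = uvec (k : ℕ) jc := by rw [hAX]
    rw [h2]
    rfl
  have hm : ∀ i jc, (B * (A * X)) i jc
      = ∑ t : Fin n, (if (t : ℕ) < r then (Z *ᵥ u (σ t)) i * u (σ t) jc else 0) := by
    intro i jc
    set G : ℕ → ℝ := fun t =>
      if h : t < n then (Z *ᵥ u (σ ⟨t, h⟩)) i * u (σ ⟨t, h⟩) jc else 0 with hGdef
    have hterm : ∀ k : ℕ, (Z *ᵥ uvec k) i * uvec k jc = G k := by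
      intro k
      simp only [huvec, hGdef]
      by_cases h : k < n
      · rw [dif_pos h, dif_pos h]
        by_cases h0 : lam Z (σ ⟨k, h⟩) = 0
        · rw [if_pos h0, Zmul_evec_zero Z _ h0]
          simp
        · rw [if_neg h0]
      · rw [dif_neg h, dif_neg h]
        simp
    have e1 : (B * (A * X)) i jc = ∑ k ∈ Finset.range r, G k := by
      rw [hG]
      rw [Fin.sum_univ_eq_sum_range (fun k => (Z *ᵥ uvec k) i * uvec k jc) r]
      exact Finset.sum_congr rfl fun k _ => hterm k
    have e2 : ∑ k ∈ Finset.range r, G k = ∑ k ∈ Finset.range (min r n), G k := by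
      symm
      apply Finset.sum_subset
      · exact Finset.range_subset_range.mpr (min_le_left r n)
      · intro x _ hx
        rw [Finset.mem_range] at hx
        have hxn : ¬ x < n := by
          rcases Finset.mem_range.mp (by assumption : x ∈ Finset.range r) with _
          omega
        rw [hGdef]; exact dif_neg hxn
    have e3 : ∑ t : Fin n, (if (t : ℕ) < r then (Z *ᵥ u (σ t)) i * u (σ t) jc else 0)
        = ∑ k ∈ Finset.range (min r n), G k := by
      have h4 : ∀ t : Fin n, (if (t : ℕ) < r then (Z *ᵥ u (σ t)) i * u (σ t) jc else 0)
          = (if (t : ℕ) < r then G (t : ℕ) else 0) := by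
        intro t
        by_cases h : (t : ℕ) < r
        · rw [if_pos h, if_pos h]
          simp only [hGdef]
          rw [dif_pos t.isLt]
        · rw [if_neg h, if_neg h]
      simp_rw [h4]
      rw [Fin.sum_univ_eq_sum_range (fun t => if t < r then G t else 0) n]
      rw [← Finset.sum_filter]
      have hfil : (Finset.range n).filter (fun k => k < r) = Finset.range (min r n) := by
        ext x; simp [Finset.mem_range]; omega
      rw [hfil]
    rw [e1, e2, ← e3]
  have hw : ∀ t s : Fin n, u (σ t) ⬝ᵥ u (σ s) = if t = s then 1 else 0 := by
    intro t s
    simp only [hu]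
    rw [evec_dot]
    simp [Equiv.apply_eq_iff_eq]
  have hz_row : ∀ (i : Fin dout) (jc : Fin n),
      Z i jc = ∑ t : Fin n, (Z *ᵥ u (σ t)) i * u (σ t) jc := by
    intro i jc
    have hx := (hGram Z).eigenvectorBasis.sum_repr'
      ((WithLp.equiv 2 (Fin n → ℝ)).symm (Z i))
    have hcoord := congrArg (fun v : EuclideanSpace ℝ (Fin n) => v jc) hx
    simp only at hcoord
    rw [E_sum_smul_coord] at hcoord
    change _ = Z i jc at hcoord
    have hinner : ∀ j : Fin n,
        ⟪evec Z j, (WithLp.equiv 2 (Fin n → ℝ)).symm (Z i)⟫ * (evec Z j : Fin n → ℝ) jc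
          = (Z *ᵥ u j) i * u j jc := by
      intro j
      rw [inner_evec_row]
    rw [Finset.sum_congr rfl fun j _ => hinner j] at hcoord
    rw [← hcoord]
    exact (Equiv.sum_comp σ (fun j => (Z *ᵥ u j) i * u j jc)).symm
  have hrowdiff : ∀ (i : Fin dout) (jc : Fin n),
      (Z - B * (A * X)) i jc
        = ∑ t : Fin n, (if r ≤ (t:ℕ) then (Z *ᵥ u (σ t)) i else 0) * u (σ t) jc := by
    intro i jc
    rw [Matrix.sub_apply, hz_row i jc, hm i jc, ← Finset.sum_sub_distrib]
    refine Finset.sum_congr rfl fun t _ => ?_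
    by_cases h : (t:ℕ) < r
    · rw [if_neg (by omega : ¬ r ≤ (t:ℕ)), if_pos h, zero_mul, sub_self]
    · rw [if_pos (by omega : r ≤ (t:ℕ)), if_neg h, sub_zero]
  calc ∑ i, ∑ jc, ((Z - B * (A * X)) i jc) ^ 2
      = ∑ i, ∑ jc, (∑ t : Fin n,
          (if r ≤ (t:ℕ) then (Z *ᵥ u (σ t)) i else 0) * u (σ t) jc) ^ 2 := by
        exact Finset.sum_congr rfl fun i _ => Finset.sum_congr rfl fun jc _ => by
          rw [hrowdiff]
    _ = ∑ i, ∑ t : Fin n, (if r ≤ (t:ℕ) then (Z *ᵥ u (σ t)) i else 0) ^ 2 := by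
        exact Finset.sum_congr rfl fun i _ =>
          sum_sq_orthfam (ι := Fin n) (fun t => if r ≤ (t:ℕ) then (Z *ᵥ u (σ t)) i else 0)
            (fun t => u (σ t)) hw
    _ = ∑ t : Fin n, (if r ≤ (t:ℕ) then ∑ i, ((Z *ᵥ u (σ t)) i) ^ 2 else 0) := by
        rw [Finset.sum_comm]
        refine Finset.sum_congr rfl fun t _ => ?_
        by_cases h : r ≤ (t:ℕ)
        · simp only [if_pos h]
        · simp only [if_neg h]
          simp
    _ = ∑ t : Fin n, if r ≤ (t:ℕ) then lam Z (σ t) else 0 := by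
        refine Finset.sum_congr rfl fun t _ => ?_
        by_cases h : r ≤ (t:ℕ)
        · rw [if_pos h, if_pos h]
          have h1 := lam_eq Z (σ t)
          rw [dotProduct_eq_sum] at h1
          simp_rw [← sq] at h1
          exact h1
        · rw [if_neg h, if_neg h]

end Upper

/-- `E_id(r)² = ‖Y_⊥‖_F² + s_{>r}(Y_∥)²`, where `Y_∥` is the
row-wise orthogonal projection of `Y` onto `row(X)` and `Y_⊥ = Y − Y_∥`. -/
theorem stmt11 {din dout n : ℕ} (X : Matrix (Fin din) (Fin n) ℝ)
    (Y : Matrix (Fin dout) (Fin n) ℝ) (r : ℕ) :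
    (Eid X Y r) ^ 2 =
      frobNorm (Y - projRows (rowSpaceE X) Y) ^ 2 +
        (sGt (projRows (rowSpaceE X) Y) r) ^ 2 := by
  classical
  set S := rowSpaceE X with hS
  set Z := projRows S Y with hZ
  set σ := Tuple.sort (fun j => -(svAux Z j)) with hσ
  set tail := ∑ t : Fin n, if r ≤ (t:ℕ) then lam Z (σ t) else 0 with htail
  set c := (∑ i, ∑ j, ((Y - Z) i j) ^ 2) + tail with hc
  have htail_nonneg : 0 ≤ tail := by
    rw [htail]
    refine Finset.sum_nonneg fun t _ => ?_
    by_cases h : r ≤ (t:ℕ)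
    · rw [if_pos h]; exact lam_nonneg Z _
    · rw [if_neg h]
  have hfr_nonneg : 0 ≤ ∑ i, ∑ j, ((Y - Z) i j) ^ 2 := by positivity
  have hc_nonneg : 0 ≤ c := by rw [hc]; linarith
  have hsGt_sq : (sGt Z r) ^ 2 = tail := by
    rw [sGt, Real.sq_sqrt]
    · rw [htail]
      refine Finset.sum_congr rfl fun t _ => ?_
      by_cases h : r ≤ (t:ℕ)
      · rw [if_pos h, if_pos h, sv_sq]
      · rw [if_neg h, if_neg h]
    · refine Finset.sum_nonneg fun t _ => ?_
      by_cases h : r ≤ (t:ℕ)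
      · rw [if_pos h]; positivity
      · rw [if_neg h]
  have hfrob_sq : ∀ {m k : ℕ} (W : Matrix (Fin m) (Fin k) ℝ),
      frobNorm W ^ 2 = ∑ i, ∑ j, (W i j) ^ 2 := by
    intro m k W
    simp only [frobNorm]; rw [Real.sq_sqrt (by positivity)]
  have hrowsZ : ∀ i, (WithLp.equiv 2 (Fin n → ℝ)).symm (Z i) ∈ S := by
    intro i
    rw [hZ, hS, projRows_row]
    exact ((rowSpaceE X).orthogonalProjectionOnto _).2
  have hlower : ∀ (A : Matrix (Fin r) (Fin din) ℝ) (B : Matrix (Fin dout) (Fin r) ℝ),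
      Real.sqrt c ≤ frobNorm (Y - B * A * X) := by
    intro A B
    simp only [frobNorm]
    apply Real.sqrt_le_sqrt
    have hpy := pythagoras X Y (B * A * X) (fun i => by
      rw [Matrix.mul_assoc, ← Matrix.mul_assoc]
      exact rows_mul_mem (B * A) X i)
    have hco := core_lower Z B (A * X)
    have hassoc : B * A * X = B * (A * X) := Matrix.mul_assoc B A X
    rw [← hassoc] at hco
    rw [hc, hpy, ← hS, ← hZ]
    have : tail ≤ ∑ i, ∑ j, ((Z - B * A * X) i j) ^ 2 := by
      rw [htail]; exact hco
    linarith
  obtain ⟨A₀, B₀, hAB⟩ := exists_factor (r := r) Z X (by rw [← hS]; exact hrowsZ)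
  have hupper : frobNorm (Y - B₀ * A₀ * X) = Real.sqrt c := by
    simp only [frobNorm]
    congr 1
    have hpy := pythagoras X Y (B₀ * A₀ * X) (fun i => by
      rw [Matrix.mul_assoc, ← Matrix.mul_assoc]
      exact rows_mul_mem (B₀ * A₀) X i)
    rw [hpy, ← hS, ← hZ, hc]
    congr 1
    rw [Matrix.mul_assoc, hAB, htail, hσ]
  have hEid : Eid X Y r = Real.sqrt c := by
    have hbdd1 : BddBelow (Set.range fun B : Matrix (Fin dout) (Fin r) ℝ =>
        frobNorm (Y - B * A₀ * X)) := by
      refine ⟨0, ?_⟩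
      rintro x ⟨B, rfl⟩
      simp only [frobNorm]
      exact Real.sqrt_nonneg _
    have hbdd2 : BddBelow (Set.range fun A : Matrix (Fin r) (Fin din) ℝ =>
        ⨅ B : Matrix (Fin dout) (Fin r) ℝ, frobNorm (Y - B * A * X)) := by
      refine ⟨0, ?_⟩
      rintro x ⟨A, rfl⟩
      refine Real.iInf_nonneg fun B => ?_
      simp only [frobNorm]
      exact Real.sqrt_nonneg _
    apply le_antisymm
    · calc Eid X Y r ≤ ⨅ B : Matrix (Fin dout) (Fin r) ℝ, frobNorm (Y - B * A₀ * X) :=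
            ciInf_le hbdd2 A₀
        _ ≤ frobNorm (Y - B₀ * A₀ * X) := ciInf_le hbdd1 B₀
        _ = Real.sqrt c := hupper
    · exact le_ciInf fun A => le_ciInf fun B => hlower A B
  rw [hEid, Real.sq_sqrt hc_nonneg, hc, ← hfrob_sq (Y - Z), hsGt_sq]

end

end CoLA
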